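/- Fix n ≥ 2, let G be a graph, ω a placement function on G, and f : V(G) → V(C) satisfying (C1) and (C2). Suppose C(ℓ,j) with j ≥ 2 is a reversal point (of start type or end type), and let H₁ and H₂ be the two connected components of the graph obtained from C by deleting the vertex C(ℓ,j). Then for any wrapping pattern w_0,…,w_k in G, either f(w_p) ∈ H₁ ∪ {C(ℓ,j)} for all p ∈ {0,…,k}, or f(w_p) ∈ H₂ ∪ {C(ℓ,j)} for all p ∈ {0,…,k}. -/

import Mathlib

/-- Vertices of the infinite n-od graph `C`: a branch vertex, and nodes `C(ℓ,j)`
(intended for `1 ≤ ℓ ≤ n`, `j ≥ 1`). -/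
inductive NOdVert : Type where
  | branch : NOdVert
  | node : ℕ → ℕ → NOdVert
deriving DecidableEq

/-- `cv ℓ j` denotes the vertex `C(ℓ,j)`, where `C(ℓ,0)` is the branch vertex. -/
def cv (ℓ j : ℕ) : NOdVert := if j = 0 then NOdVert.branch else NOdVert.node ℓ j

/-- Adjacency in the infinite n-od `C`: `C(ℓ,j)` is adjacent to `C(ℓ,j+1)` for
`1 ≤ ℓ ≤ n` and `j ≥ 0` (the case `j = 0` gives branch–`C(ℓ,1)` edges). -/
def nodAdj (n : ℕ) (u v : NOdVert) : Prop :=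
  ∃ ℓ j, 1 ≤ ℓ ∧ ℓ ≤ n ∧
    ((u = cv ℓ j ∧ v = cv ℓ (j + 1)) ∨ (v = cv ℓ j ∧ u = cv ℓ (j + 1)))

/-- The point `b(i,t) = ((1+t)cos(iπ/n), (1+t)sin(iπ/n))` in the plane. -/
noncomputable def bpt (n i : ℕ) (t : ℝ) : ℝ × ℝ :=
  ((1 + t) * Real.cos (i * Real.pi / n), (1 + t) * Real.sin (i * Real.pi / n))

/-- The origin `o` of the plane. -/
def origin : ℝ × ℝ := (0, 0)

/-- A placement function: on each edge of `G`, one endpoint maps to `o` and the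
other to some `b(i,t)` with `i ∈ {0,…,n}`, `t ∈ [0,1]`. -/
def IsPlacement {V : Type*} (n : ℕ) (G : SimpleGraph V) (ω : V → ℝ × ℝ) : Prop :=
  ∀ u v, G.Adj u v →
    (ω u = origin ∧ ∃ i ≤ n, ∃ t ∈ Set.Icc (0 : ℝ) 1, ω v = bpt n i t) ∨
    (ω v = origin ∧ ∃ i ≤ n, ∃ t ∈ Set.Icc (0 : ℝ) 1, ω u = bpt n i t)

/-- Condition (C1). -/
def CondC1 {V : Type*} (n : ℕ) (ω : V → ℝ × ℝ) (f : V → NOdVert) : Prop :=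
  ∀ u v, f u = f v →
    (ω u = origin ∧ ω v = origin) ∨
    ∃ i ≤ n, ∃ s ∈ Set.Icc (0 : ℝ) 1, ∃ t ∈ Set.Icc (0 : ℝ) 1,
      ω u = bpt n i s ∧ ω v = bpt n i t

/-- Condition (C2): `f` maps adjacent vertices of `G` to adjacent vertices of `C`. -/
def CondC2 {V : Type*} (n : ℕ) (G : SimpleGraph V) (f : V → NOdVert) : Prop :=
  ∀ u v, G.Adj u v → nodAdj n (f u) (f v)

/-- `w 0, …, w k` is a wrapping pattern in `G` for the placement function `ω`. -/
def IsWrapping {V : Type*} (n : ℕ) (G : SimpleGraph V) (ω : V → ℝ × ℝ)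
    (w : ℕ → V) (k : ℕ) : Prop :=
  0 < k ∧ 2 * (n + 1) ∣ k ∧
  (∀ p < k, G.Adj (w p) (w (p + 1))) ∧
  (∀ q, 2 * q ≤ k → ∃ t ∈ Set.Icc (0 : ℝ) 1, ω (w (2 * q)) = bpt n (q % (n + 1)) t) ∧
  (∀ q, 2 * q + 1 ≤ k → ω (w (2 * q + 1)) = origin)

/-- The branch-star of `C`: the branch vertex together with `C(ℓ,1)`, `1 ≤ ℓ ≤ n`. -/
def branchStar (n : ℕ) : Set NOdVert :=
  {NOdVert.branch} ∪ {x | ∃ ℓ, 1 ≤ ℓ ∧ ℓ ≤ n ∧ x = NOdVert.node ℓ 1}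

private lemma bpt_ne_origin {n i : ℕ} {t : ℝ} (ht : 0 ≤ t) : bpt n i t ≠ origin := by
  intro h
  have h1 : (1 + t) * Real.cos (i * Real.pi / n) = 0 := congrArg Prod.fst h
  have h2 : (1 + t) * Real.sin (i * Real.pi / n) = 0 := congrArg Prod.snd h
  have hpos : (0:ℝ) < 1 + t := by linarith
  have hc : Real.cos (i * Real.pi / n) = 0 := by
    rcases mul_eq_zero.1 h1 with h | h
    · linarith
    · exact h
  have hs : Real.sin (i * Real.pi / n) = 0 := by
    rcases mul_eq_zero.1 h2 with h | h
    · linarith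
    · exact h
  nlinarith [Real.sin_sq_add_cos_sq (i * Real.pi / n)]

private lemma bpt_inj {n i i' : ℕ} (hn : 1 ≤ n) (hi : i ≤ n) (hi' : i' ≤ n)
    {s s' : ℝ} (hs : 0 ≤ s) (hs' : 0 ≤ s') (h : bpt n i s = bpt n i' s') : i = i' := by
  have h1 : (1 + s) * Real.cos (i * Real.pi / n) = (1 + s') * Real.cos (i' * Real.pi / n) :=
    congrArg Prod.fst h
  have h2 : (1 + s) * Real.sin (i * Real.pi / n) = (1 + s') * Real.sin (i' * Real.pi / n) :=
    congrArg Prod.snd h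
  have a := Real.sin_sq_add_cos_sq (i * Real.pi / n)
  have b := Real.sin_sq_add_cos_sq (i' * Real.pi / n)
  have k1 := congrArg (fun x => x ^ 2) h1
  have k2 := congrArg (fun x => x ^ 2) h2
  have e : (1 + s) ^ 2 = (1 + s') ^ 2 := by
    linear_combination k1 + k2 - (1 + s) ^ 2 * a + (1 + s') ^ 2 * b
  have hss : s = s' := by
    have h3 : (s - s') * (2 + s + s') = 0 := by linear_combination e
    rcases mul_eq_zero.1 h3 with h' | h'
    · linarith
    · linarith
  subst hss
  have hpos : (0:ℝ) < 1 + s := by linarith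
  have hcos : Real.cos (i * Real.pi / n) = Real.cos (i' * Real.pi / n) :=
    mul_left_cancel₀ (ne_of_gt hpos) h1
  have hn0 : (0:ℝ) < n := by exact_mod_cast Nat.lt_of_lt_of_le Nat.zero_lt_one hn
  have hπ := Real.pi_pos
  have hiR : (i:ℝ) ≤ n := by exact_mod_cast hi
  have hiR' : (i':ℝ) ≤ n := by exact_mod_cast hi'
  have m1 : (i:ℝ) * Real.pi / n ∈ Set.Icc 0 Real.pi := by
    constructor
    · positivity
    · rw [div_le_iff₀ hn0]; nlinarith
  have m2 : (i':ℝ) * Real.pi / n ∈ Set.Icc 0 Real.pi := by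
    constructor
    · positivity
    · rw [div_le_iff₀ hn0]; nlinarith
  have hθ := Real.injOn_cos m1 m2 hcos
  field_simp at hθ
  exact_mod_cast hθ

private lemma cv_eq_node {ℓ m : ℕ} (h : 1 ≤ m) : cv ℓ m = NOdVert.node ℓ m := by
  simp [cv]; omega

private lemma neighbor_of_node {n a b : ℕ} {x : NOdVert} (hb : 1 ≤ b)
    (h : nodAdj n x (NOdVert.node a b)) :
    x = cv a (b - 1) ∨ x = cv a (b + 1) := by
  obtain ⟨ℓ', j', _, _, (⟨hx, hv⟩ | ⟨hv, hx⟩)⟩ := h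
  · -- x = cv ℓ' j', node a b = cv ℓ' (j'+1)
    unfold cv at hv
    simp at hv
    obtain ⟨hℓ, hj⟩ := hv
    left
    subst hℓ
    rw [hx]
    congr 1
    omega
  · -- node a b = cv ℓ' j', x = cv ℓ' (j'+1)
    unfold cv at hv
    by_cases hz : j' = 0
    · subst hz; simp at hv
    · rw [if_neg hz] at hv
      simp at hv
      obtain ⟨hℓ, hj⟩ := hv
      right
      subst hℓ
      rw [hx]
      congr 1
      omega

private lemma nodAdj_symm {n : ℕ} {u v : NOdVert} (h : nodAdj n u v) : nodAdj n v u := by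
  obtain ⟨ℓ', j', h1, h2, h3⟩ := h
  exact ⟨ℓ', j', h1, h2, h3.symm⟩
private lemma mod_pred {n q : ℕ} (h : q % (n + 1) = 0) (hq : 1 ≤ q) :
    (q - 1) % (n + 1) = n := by
  obtain ⟨m, hm⟩ := Nat.dvd_of_mod_eq_zero h
  have hm1 : 1 ≤ m := by
    rcases Nat.eq_zero_or_pos m with h' | h'
    · subst h'; simp at hm; omega
    · exact h'
  obtain ⟨m', rfl⟩ : ∃ m', m = m' + 1 := ⟨m - 1, by omega⟩
  have e : q - 1 = n + (n + 1) * m' := by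
    rw [hm, Nat.mul_add, Nat.mul_one, Nat.add_sub_assoc (by omega : 1 ≤ n + 1)]
    rw [Nat.add_comm]
    congr 1
  rw [e, Nat.add_mul_mod_self_left, Nat.mod_eq_of_lt (by omega)]

private lemma mod_succ {n q : ℕ} (h : q % (n + 1) = 0) (hn : 1 ≤ n) :
    (q + 1) % (n + 1) = 1 := by
  conv_lhs => rw [Nat.add_mod]
  rw [h]
  simp [Nat.mod_eq_of_lt (show 1 < n + 1 by omega)]

section Main
variable {V : Type*} {n : ℕ} {G : SimpleGraph V} {ω : V → ℝ × ℝ} {f : V → NOdVert}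

private lemma ray_eq (h1 : CondC1 n ω f) (hn : 1 ≤ n) {x y : V} {i i' : ℕ} {s s' : ℝ}
    (hxy : f x = f y) (hx : ω x = bpt n i s) (hy : ω y = bpt n i' s')
    (hi : i ≤ n) (hi' : i' ≤ n) (hs : 0 ≤ s) (hs' : 0 ≤ s') : i = i' := by
  rcases h1 x y hxy with ⟨ho, _⟩ | ⟨i₀, hi₀, s₀, hs₀, u₀, hu₀, hex, hey⟩
  · exact absurd ho (by rw [hx]; exact bpt_ne_origin hs)
  · have e1 : i = i₀ := bpt_inj hn hi hi₀ hs hs₀.1 (hx.symm.trans hex)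
    have e2 : i' = i₀ := bpt_inj hn hi' hi₀ hs' hu₀.1 (hy.symm.trans hey)
    omega

private lemma origin_class (h1 : CondC1 n ω f) {x y : V}
    (hxy : f x = f y) (hx : ω x = origin) : ω y = origin := by
  rcases h1 x y hxy with ⟨_, ho⟩ | ⟨i₀, hi₀, s₀, hs₀, u₀, hu₀, hex, hey⟩
  · exact ho
  · exact absurd (hx.symm.trans hex).symm (bpt_ne_origin hs₀.1)
private lemma key_no_interior
    (hn : 2 ≤ n) (h1 : CondC1 n ω f) (h2 : CondC2 n G f)
    {ℓ j : ℕ} (hj : 2 ≤ j)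
    {x₀ : V} {t₀ : ℝ} (hx₀f : f x₀ = NOdVert.node ℓ j)
    (hx₀ω : ω x₀ = bpt n 0 t₀) (ht₀ : t₀ ∈ Set.Icc (0:ℝ) 1)
    {r : ℕ} (hr : r = 1 ∨ r = n)
    {ym yp : V} {sm sp : ℝ}
    (hymf : f ym = cv ℓ (j - 2)) (hymω : ω ym = bpt n r sm) (hsm : sm ∈ Set.Icc (0:ℝ) 1)
    (hypf : f yp = cv ℓ (j + 2)) (hypω : ω yp = bpt n r sp) (hsp : sp ∈ Set.Icc (0:ℝ) 1)
    {w : ℕ → V} {k : ℕ} (hw : IsWrapping n G ω w k)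
    {p : ℕ} (hp1 : 1 ≤ p) (hpk : p + 1 ≤ k) : f (w p) ≠ NOdVert.node ℓ j := by
  intro hQ
  obtain ⟨hk0, hkd, hadj, heven, hodd⟩ := hw
  have hn1 : 1 ≤ n := by omega
  rcases Nat.even_or_odd p with ⟨q, hq⟩ | ⟨q, hq⟩
  swap
  · -- odd position: contradiction with x₀'s ray
    have ho : ω (w p) = origin := by
      have := hodd q (by omega)
      rw [show 2 * q + 1 = p by omega] at this
      exact this
    have := origin_class h1 (hQ.trans hx₀f.symm) ho
    exact bpt_ne_origin ht₀.1 (hx₀ω.symm.trans this)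
  · have hq2 : p = 2 * q := by omega
    obtain ⟨t, ht, hwt⟩ := heven q (by omega)
    rw [← hq2] at hwt
    have hq0 : q % (n + 1) = 0 :=
      ray_eq h1 hn1 (hQ.trans hx₀f.symm) hwt hx₀ω
        (Nat.le_of_lt_succ (Nat.mod_lt _ (by omega))) (Nat.zero_le n) ht.1 ht₀.1
    have hqn : n + 1 ≤ q := Nat.le_of_dvd (by omega) (Nat.dvd_of_mod_eq_zero hq0)
    have hk2 : 2 ∣ k := dvd_trans ⟨n + 1, rfl⟩ hkd
    have hpk2 : p + 2 ≤ k := by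
      obtain ⟨c, hc⟩ := hk2
      omega
    obtain ⟨P, hP⟩ : ∃ P, p = P + 2 := ⟨p - 2, by omega⟩
    have hmlo : (q - 1) % (n + 1) = n := mod_pred hq0 (by omega)
    have hmhi : (q + 1) % (n + 1) = 1 := mod_succ hq0 hn1
    obtain ⟨tm, htm, hwtm⟩ := heven (q - 1) (by omega)
    rw [show 2 * (q - 1) = P by omega, hmlo] at hwtm
    obtain ⟨tp, htp, hwtp⟩ := heven (q + 1) (by omega)
    rw [show 2 * (q + 1) = p + 2 by omega, hmhi] at hwtp
    have notcut : ∀ (y : V) (i : ℕ) (s : ℝ), ω y = bpt n i s → i ≤ n → 0 ≤ s → i ≠ 0 →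
        f y ≠ NOdVert.node ℓ j := by
      intro y i s hωy hi hs hi0 hfy
      exact hi0 (ray_eq h1 hn1 (hfy.trans hx₀f.symm) hωy hx₀ω hi (Nat.zero_le n) hs ht₀.1)
    rcases hr with rfl | hrn
    · -- r = 1 : look at positions p-1 (= P+1) and p-2 (= P), which have ray n
      have adj1 : nodAdj n (f (w (P + 1))) (f (w p)) := by
        have := h2 _ _ (hadj (P + 1) (by omega))
        rw [show P + 1 + 1 = p by omega] at this
        exact this
      rw [hQ] at adj1
      have hnb := neighbor_of_node (by omega : 1 ≤ j) adj1
      have adj0 : nodAdj n (f (w P)) (f (w (P + 1))) := h2 _ _ (hadj P (by omega))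
      rcases hnb with hc | hc
      · rw [hc, cv_eq_node (by omega)] at adj0
        have h2nb := neighbor_of_node (by omega : 1 ≤ j - 1) adj0
        rcases h2nb with hd | hd
        · have hfP : f (w P) = cv ℓ (j - 2) := by rw [hd]; congr 1
          have := ray_eq h1 hn1 (hfP.trans hymf.symm) hwtm hymω le_rfl (by omega) htm.1 hsm.1
          omega
        · have hfP : f (w P) = NOdVert.node ℓ j := by
            rw [hd, show j - 1 + 1 = j by omega, cv_eq_node (by omega)]
          exact notcut _ _ _ hwtm le_rfl htm.1 (by omega) hfP
      · rw [hc, cv_eq_node (by omega)] at adj0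
        have h2nb := neighbor_of_node (by omega : 1 ≤ j + 1) adj0
        rcases h2nb with hd | hd
        · have hfP : f (w P) = NOdVert.node ℓ j := by
            rw [hd, show j + 1 - 1 = j by omega, cv_eq_node (by omega)]
          exact notcut _ _ _ hwtm le_rfl htm.1 (by omega) hfP
        · have hfP : f (w P) = cv ℓ (j + 2) := by rw [hd]
          have := ray_eq h1 hn1 (hfP.trans hypf.symm) hwtm hypω le_rfl (by omega) htm.1 hsp.1
          omega
    · -- r = n : look at positions p+1 and p+2, which have ray 1
      rw [hrn] at hymω hypω
      have adjf : nodAdj n (f (w p)) (f (w (p + 1))) := h2 _ _ (hadj p (by omega))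
      rw [hQ] at adjf
      have hnb := neighbor_of_node (by omega : 1 ≤ j) (nodAdj_symm adjf)
      have adjf2 : nodAdj n (f (w (p + 1))) (f (w (p + 2))) := by
        have := h2 _ _ (hadj (p + 1) (by omega))
        rw [show p + 1 + 1 = p + 2 by omega] at this
        exact this
      rcases hnb with hc | hc
      · rw [hc, cv_eq_node (by omega)] at adjf2
        have h2nb := neighbor_of_node (by omega : 1 ≤ j - 1) (nodAdj_symm adjf2)
        rcases h2nb with hd | hd
        · have hfP : f (w (p + 2)) = cv ℓ (j - 2) := by rw [hd]; congr 1
          have := ray_eq h1 hn1 (hfP.trans hymf.symm) hwtp hymω (by omega) le_rfl htp.1 hsm.1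
          omega
        · have hfP : f (w (p + 2)) = NOdVert.node ℓ j := by
            rw [hd, show j - 1 + 1 = j by omega, cv_eq_node (by omega)]
          exact notcut _ _ _ hwtp (by omega) htp.1 (by omega) hfP
      · rw [hc, cv_eq_node (by omega)] at adjf2
        have h2nb := neighbor_of_node (by omega : 1 ≤ j + 1) (nodAdj_symm adjf2)
        rcases h2nb with hd | hd
        · have hfP : f (w (p + 2)) = NOdVert.node ℓ j := by
            rw [hd, show j + 1 - 1 = j by omega, cv_eq_node (by omega)]
          exact notcut _ _ _ hwtp (by omega) htp.1 (by omega) hfP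
        · have hfP : f (w (p + 2)) = cv ℓ (j + 2) := by rw [hd]
          have := ray_eq h1 hn1 (hfP.trans hypf.symm) hwtp hypω (by omega) le_rfl htp.1 hsp.1
          omega
private lemma cross_back (h2 : CondC2 n G f) {ℓ j : ℕ} (hj : 2 ≤ j)
    {w : ℕ → V} {k : ℕ} (hadj : ∀ p < k, G.Adj (w p) (w (p + 1))) :
    ∀ b, b ≤ k → (∃ j', j < j' ∧ f (w b) = NOdVert.node ℓ j') →
    ∀ a, a < b → ¬(∃ j', j < j' ∧ f (w a) = NOdVert.node ℓ j') →
    f (w a) ≠ NOdVert.node ℓ j →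
    ∃ p, 1 ≤ p ∧ p + 1 ≤ k ∧ f (w p) = NOdVert.node ℓ j := by
  intro b
  induction b using Nat.strong_induction_on with
  | _ b ih =>
    intro hbk hHb a hab hHa hQa
    obtain ⟨j', hjj', hfb⟩ := hHb
    obtain ⟨B, rfl⟩ : ∃ B, b = B + 1 := ⟨b - 1, by omega⟩
    have adj : nodAdj n (f (w B)) (f (w (B + 1))) := h2 _ _ (hadj B (by omega))
    rw [hfb] at adj
    have hnb := neighbor_of_node (by omega : 1 ≤ j') (nodAdj_symm (nodAdj_symm adj))
    rcases hnb with hd | hd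
    · rw [cv_eq_node (by omega)] at hd
      by_cases hcut : j' - 1 = j
      · have hQB : f (w B) = NOdVert.node ℓ j := by rw [hd, hcut]
        have hne : a ≠ B := fun h' => hQa (h' ▸ hQB)
        exact ⟨B, by omega, by omega, hQB⟩
      · have hHB : ∃ j'', j < j'' ∧ f (w B) = NOdVert.node ℓ j'' := ⟨j' - 1, by omega, hd⟩
        have hane : a ≠ B := fun h' => hHa (h' ▸ hHB)
        exact ih B (by omega) (by omega) hHB a (by omega) hHa hQa
    · rw [cv_eq_node (by omega)] at hd
      have hHB : ∃ j'', j < j'' ∧ f (w B) = NOdVert.node ℓ j'' := ⟨j' + 1, by omega, hd⟩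
      have hane : a ≠ B := fun h' => hHa (h' ▸ hHB)
      exact ih B (by omega) (by omega) hHB a (by omega) hHa hQa

private lemma cross_fwd (h2 : CondC2 n G f) {ℓ j : ℕ} (hj : 2 ≤ j)
    {w : ℕ → V} {k : ℕ} (hadj : ∀ p < k, G.Adj (w p) (w (p + 1))) :
    ∀ d a, a + d ≤ k → (∃ j', j < j' ∧ f (w a) = NOdVert.node ℓ j') →
    ¬(∃ j', j < j' ∧ f (w (a + d)) = NOdVert.node ℓ j') →
    f (w (a + d)) ≠ NOdVert.node ℓ j → 0 < d →
    ∃ p, 1 ≤ p ∧ p + 1 ≤ k ∧ f (w p) = NOdVert.node ℓ j := by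
  intro d
  induction d with
  | zero => intro a _ _ _ _ h; omega
  | succ d ih =>
    intro a hk hHa hHb hQb _
    obtain ⟨j', hjj', hfa⟩ := hHa
    have adj : nodAdj n (f (w a)) (f (w (a + 1))) := h2 _ _ (hadj a (by omega))
    rw [hfa] at adj
    have hnb := neighbor_of_node (by omega : 1 ≤ j') (nodAdj_symm adj)
    by_cases hH1 : ∃ j'', j < j'' ∧ f (w (a + 1)) = NOdVert.node ℓ j''
    · rcases Nat.eq_zero_or_pos d with rfl | hdp
      · exact absurd hH1 (by simpa using hHb)
      · refine ih (a + 1) (by omega) hH1 ?_ ?_ hdp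
        · rw [show a + 1 + d = a + (d + 1) by omega]; exact hHb
        · rw [show a + 1 + d = a + (d + 1) by omega]; exact hQb
    · rcases hnb with hd' | hd'
      · rw [cv_eq_node (by omega)] at hd'
        by_cases hcut : j' - 1 = j
        · have hQ1 : f (w (a + 1)) = NOdVert.node ℓ j := by rw [hd', hcut]
          rcases Nat.eq_zero_or_pos d with rfl | hdp
          · exact absurd hQ1 (by simpa using hQb)
          · exact ⟨a + 1, by omega, by omega, hQ1⟩
        · exact absurd ⟨j' - 1, by omega, hd'⟩ hH1
      · rw [cv_eq_node (by omega)] at hd'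
        exact absurd ⟨j' + 1, by omega, hd'⟩ hH1
private lemma start_extract (hn : 2 ≤ n) (h1 : CondC1 n ω f) (h2 : CondC2 n G f)
    {ℓ j : ℕ} (hj : 2 ≤ j) {x₀ : V} {t₀ : ℝ} (hx₀f : f x₀ = NOdVert.node ℓ j)
    (hx₀ω : ω x₀ = bpt n 0 t₀) (ht₀ : t₀ ∈ Set.Icc (0:ℝ) 1)
    {z : ℕ → V} {k' : ℕ} (hz : IsWrapping n G ω z k') (hz0 : f (z 0) = NOdVert.node ℓ j) :
    (f (z 1) = cv ℓ (j - 1) ∨ f (z 1) = cv ℓ (j + 1)) ∧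
    (f (z 1) = cv ℓ (j - 1) →
      ∃ s ∈ Set.Icc (0:ℝ) 1, ω (z 2) = bpt n 1 s ∧ f (z 2) = cv ℓ (j - 2)) ∧
    (f (z 1) = cv ℓ (j + 1) →
      ∃ s ∈ Set.Icc (0:ℝ) 1, ω (z 2) = bpt n 1 s ∧ f (z 2) = cv ℓ (j + 2)) := by
  obtain ⟨hk0, hkd, hadj, heven, hodd⟩ := hz
  have hk6 : 2 * (n + 1) ≤ k' := Nat.le_of_dvd hk0 hkd
  have adj0 : nodAdj n (f (z 0)) (f (z 1)) := h2 _ _ (hadj 0 (by omega))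
  rw [hz0] at adj0
  have hnb := neighbor_of_node (by omega : 1 ≤ j) (nodAdj_symm adj0)
  obtain ⟨s, hs, hωz2⟩ := heven 1 (by omega)
  rw [show (2:ℕ) * 1 = 2 by norm_num, Nat.mod_eq_of_lt (by omega)] at hωz2
  have adj1 : nodAdj n (f (z 1)) (f (z 2)) := h2 _ _ (hadj 1 (by omega))
  have notcut : f (z 2) ≠ NOdVert.node ℓ j := by
    intro hfz
    have := ray_eq h1 (by omega) (hfz.trans hx₀f.symm) hωz2 hx₀ω (by omega) (by omega)
      hs.1 ht₀.1
    omega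
  refine ⟨hnb, ?_, ?_⟩
  · intro hc
    rw [hc, cv_eq_node (by omega)] at adj1
    have h2nb := neighbor_of_node (by omega : 1 ≤ j - 1) (nodAdj_symm adj1)
    rcases h2nb with hd | hd
    · exact ⟨s, hs, hωz2, by rw [hd]; congr 1⟩
    · exfalso; apply notcut; rw [hd, show j - 1 + 1 = j by omega, cv_eq_node (by omega)]
  · intro hc
    rw [hc, cv_eq_node (by omega)] at adj1
    have h2nb := neighbor_of_node (by omega : 1 ≤ j + 1) (nodAdj_symm adj1)
    rcases h2nb with hd | hd
    · exfalso; apply notcut; rw [hd, show j + 1 - 1 = j by omega, cv_eq_node (by omega)]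
    · exact ⟨s, hs, hωz2, by rw [hd]⟩

private lemma end_extract (hn : 2 ≤ n) (h1 : CondC1 n ω f) (h2 : CondC2 n G f)
    {ℓ j : ℕ} (hj : 2 ≤ j) {x₀ : V} {t₀ : ℝ} (hx₀f : f x₀ = NOdVert.node ℓ j)
    (hx₀ω : ω x₀ = bpt n 0 t₀) (ht₀ : t₀ ∈ Set.Icc (0:ℝ) 1)
    {z : ℕ → V} {k' : ℕ} (hz : IsWrapping n G ω z k')
    (hzk : f (z k') = NOdVert.node ℓ j) :
    (f (z (k' - 1)) = cv ℓ (j - 1) ∨ f (z (k' - 1)) = cv ℓ (j + 1)) ∧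
    (f (z (k' - 1)) = cv ℓ (j - 1) →
      ∃ s ∈ Set.Icc (0:ℝ) 1, ω (z (k' - 2)) = bpt n n s ∧ f (z (k' - 2)) = cv ℓ (j - 2)) ∧
    (f (z (k' - 1)) = cv ℓ (j + 1) →
      ∃ s ∈ Set.Icc (0:ℝ) 1, ω (z (k' - 2)) = bpt n n s ∧ f (z (k' - 2)) = cv ℓ (j + 2)) := by
  obtain ⟨hk0, hkd, hadj, heven, hodd⟩ := hz
  obtain ⟨c, hc⟩ := hkd
  have hc1 : 1 ≤ c := by
    rcases Nat.eq_zero_or_pos c with rfl | h'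
    · simp at hc; omega
    · exact h'
  have hmod : ((n + 1) * c - 1) % (n + 1) = n :=
    mod_pred (Nat.mul_mod_right _ _) (by nlinarith)
  have hD : k' = 2 * ((n + 1) * c) := by rw [hc]; ring
  have hDn : n + 1 ≤ (n + 1) * c := Nat.le_mul_of_pos_right _ hc1
  obtain ⟨D, hDeq⟩ : ∃ D, (n + 1) * c = D := ⟨_, rfl⟩
  rw [hDeq] at hD hDn hmod
  have adj0 : nodAdj n (f (z (k' - 1))) (f (z k')) := by
    have := h2 _ _ (hadj (k' - 1) (by omega))
    rw [show k' - 1 + 1 = k' by omega] at this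
    exact this
  rw [hzk] at adj0
  have hnb := neighbor_of_node (by omega : 1 ≤ j) adj0
  obtain ⟨s, hs, hωz2⟩ := heven (D - 1) (by omega)
  rw [show 2 * (D - 1) = k' - 2 by omega, hmod] at hωz2
  have adj1 : nodAdj n (f (z (k' - 2))) (f (z (k' - 1))) := by
    have := h2 _ _ (hadj (k' - 2) (by omega))
    rw [show k' - 2 + 1 = k' - 1 by omega] at this
    exact this
  have notcut : f (z (k' - 2)) ≠ NOdVert.node ℓ j := by
    intro hfz
    have := ray_eq h1 (by omega) (hfz.trans hx₀f.symm) hωz2 hx₀ω le_rfl (by omega)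
      hs.1 ht₀.1
    omega
  refine ⟨hnb, ?_, ?_⟩
  · intro hcc
    rw [hcc, cv_eq_node (by omega)] at adj1
    have h2nb := neighbor_of_node (by omega : 1 ≤ j - 1) adj1
    rcases h2nb with hd | hd
    · exact ⟨s, hs, hωz2, by rw [hd]; congr 1⟩
    · exfalso; apply notcut; rw [hd, show j - 1 + 1 = j by omega, cv_eq_node (by omega)]
  · intro hcc
    rw [hcc, cv_eq_node (by omega)] at adj1
    have h2nb := neighbor_of_node (by omega : 1 ≤ j + 1) adj1
    rcases h2nb with hd | hd
    · exfalso; apply notcut; rw [hd, show j + 1 - 1 = j by omega, cv_eq_node (by omega)]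
    · exact ⟨s, hs, hωz2, by rw [hd]⟩

end Main

theorem stmt11 {V : Type*} (n : ℕ) (hn : 2 ≤ n) (G : SimpleGraph V)
    (ω : V → ℝ × ℝ) (hω : IsPlacement n G ω)
    (f : V → NOdVert) (h1 : CondC1 n ω f) (h2 : CondC2 n G f)
    (ℓ j : ℕ) (hℓ1 : 1 ≤ ℓ) (hℓn : ℓ ≤ n) (hj : 2 ≤ j)
    (hrev :
      (∃ (u v : ℕ → V) (k₁ k₂ : ℕ), IsWrapping n G ω u k₁ ∧ IsWrapping n G ω v k₂ ∧
        f (u 0) = NOdVert.node ℓ j ∧ f (v 0) = NOdVert.node ℓ j ∧ f (u 1) ≠ f (v 1)) ∨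
      (∃ (u v : ℕ → V) (k₁ k₂ : ℕ), IsWrapping n G ω u k₁ ∧ IsWrapping n G ω v k₂ ∧
        f (u k₁) = NOdVert.node ℓ j ∧ f (v k₂) = NOdVert.node ℓ j ∧
        f (u (k₁ - 1)) ≠ f (v (k₂ - 1))))
    (w : ℕ → V) (k : ℕ) (hw : IsWrapping n G ω w k) :
    (∀ p ≤ k, f (w p) = NOdVert.node ℓ j ∨ ∃ j', j < j' ∧ f (w p) = NOdVert.node ℓ j') ∨
    (∀ p ≤ k, ¬ ∃ j', j < j' ∧ f (w p) = NOdVert.node ℓ j') := by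
  by_contra hcon
  push_neg at hcon
  obtain ⟨hA, hB⟩ := hcon
  obtain ⟨l, hlk, hQl, hHl⟩ := hA
  obtain ⟨b, hbk, hHb⟩ := hB
  have hHlne : ¬(∃ j', j < j' ∧ f (w l) = NOdVert.node ℓ j') := by
    rintro ⟨j', h', he⟩; exact hHl j' h' he
  have hcross : ∃ p, 1 ≤ p ∧ p + 1 ≤ k ∧ f (w p) = NOdVert.node ℓ j := by
    have hadj := hw.2.2.1
    rcases Nat.lt_or_ge l b with h' | h'
    · exact cross_back h2 hj hadj b hbk hHb l h' hHlne hQl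
    · have hne' : b ≠ l := by rintro rfl; exact hHlne hHb
      refine cross_fwd h2 hj hadj (l - b) b (by omega) hHb ?_ ?_ (by omega)
      · rw [show b + (l - b) = l by omega]; exact hHlne
      · rw [show b + (l - b) = l by omega]; exact hQl
  obtain ⟨p, hp1, hpk, hQ⟩ := hcross
  rcases hrev with ⟨u, v, k₁, k₂, hu, hv, hfu0, hfv0, hne⟩ |
      ⟨u, v, k₁, k₂, hu, hv, hfuk, hfvk, hne⟩
  · -- start-type reversal point
    obtain ⟨t₀, ht₀, hx₀ω⟩ := hu.2.2.2.1 0 (by omega)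
    rw [show 2 * 0 = 0 by norm_num, Nat.zero_mod] at hx₀ω
    obtain ⟨hnbu, hmu, hpu⟩ := start_extract hn h1 h2 hj hfu0 hx₀ω ht₀ hu hfu0
    obtain ⟨hnbv, hmv, hpv⟩ := start_extract hn h1 h2 hj hfu0 hx₀ω ht₀ hv hfv0
    rcases hnbu with hu1 | hu1 <;> rcases hnbv with hv1 | hv1
    · exact absurd (hu1.trans hv1.symm) hne
    · obtain ⟨sm, hsm, hωm, hfm⟩ := hmu hu1
      obtain ⟨sp, hsp, hωp, hfp⟩ := hpv hv1
      exact key_no_interior hn h1 h2 hj hfu0 hx₀ω ht₀ (Or.inl rfl)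
        hfm hωm hsm hfp hωp hsp hw hp1 hpk hQ
    · obtain ⟨sm, hsm, hωm, hfm⟩ := hmv hv1
      obtain ⟨sp, hsp, hωp, hfp⟩ := hpu hu1
      exact key_no_interior hn h1 h2 hj hfu0 hx₀ω ht₀ (Or.inl rfl)
        hfm hωm hsm hfp hωp hsp hw hp1 hpk hQ
    · exact absurd (hu1.trans hv1.symm) hne
  · -- end-type reversal point
    obtain ⟨c, hc⟩ := hu.2.1
    have hc1 : 1 ≤ c := by
      rcases Nat.eq_zero_or_pos c with rfl | h'
      · have := hu.1; simp at hc; omega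
      · exact h'
    have hmod0 : ((n + 1) * c) % (n + 1) = 0 := Nat.mul_mod_right _ _
    obtain ⟨t₀, ht₀, hx₀ω⟩ := hu.2.2.2.1 ((n + 1) * c) (le_of_eq (by rw [hc]; ring))
    rw [show 2 * ((n + 1) * c) = k₁ by rw [hc]; ring, hmod0] at hx₀ω
    obtain ⟨hnbu, hmu, hpu⟩ := end_extract hn h1 h2 hj hfuk hx₀ω ht₀ hu hfuk
    obtain ⟨hnbv, hmv, hpv⟩ := end_extract hn h1 h2 hj hfuk hx₀ω ht₀ hv hfvk
    rcases hnbu with hu1 | hu1 <;> rcases hnbv with hv1 | hv1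
    · exact absurd (hu1.trans hv1.symm) hne
    · obtain ⟨sm, hsm, hωm, hfm⟩ := hmu hu1
      obtain ⟨sp, hsp, hωp, hfp⟩ := hpv hv1
      exact key_no_interior hn h1 h2 hj hfuk hx₀ω ht₀ (Or.inr rfl)
        hfm hωm hsm hfp hωp hsp hw hp1 hpk hQ
    · obtain ⟨sm, hsm, hωm, hfm⟩ := hmv hv1
      obtain ⟨sp, hsp, hωp, hfp⟩ := hpu hu1
      exact key_no_interior hn h1 h2 hj hfuk hx₀ω ht₀ (Or.inr rfl)
        hfm hωm hsm hfp hωp hsp hw hp1 hpk hQ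
    · exact absurd (hu1.trans hv1.symm) hne
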